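/- Let f : ℕ → ℕ be an injective function with no periodic points, i.e. f^h(k) ≠ k for all k ∈ ℕ and all h ≥ 1. Then the isometry S_f on ℓ²(ℕ) defined by S_f e_k = e_{f(k)} has empty point spectrum: there is no nonzero x ∈ ℓ²(ℕ) and λ ∈ ℂ with S_f x = λ x. -/

import Mathlib

noncomputable def e (k : ℕ) : lp (fun _ : ℕ => ℂ) 2 := lp.single 2 k 1

/-- If the injection `f` has no periodic points, the isometry `S_f` has empty point
spectrum. -/
theorem stmt2 (f : ℕ → ℕ) (hf : Function.Injective f)
    (hper : ∀ (k h : ℕ), 1 ≤ h → f^[h] k ≠ k)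
    (S : lp (fun _ : ℕ => ℂ) 2 →L[ℂ] lp (fun _ : ℕ => ℂ) 2)
    (hS : ∀ k, S (e k) = e (f k)) :
    ¬ ∃ (x : lp (fun _ : ℕ => ℂ) 2) (lam : ℂ), x ≠ 0 ∧ S x = lam • x := by
  rintro ⟨x, lam, hx, hSx⟩
  have heval : ∀ (m : ℕ) (g : lp (fun _ : ℕ => ℂ) 2), (inner ℂ (e m) g : ℂ) = g m := by
    intro m g
    rw [e, lp.inner_single_left]; simp
  have hcoef : ∀ m : ℕ, HasSum (fun k => if m = f k then x k else 0) ((S x) m) := by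
    intro m
    have h1 : HasSum (fun k : ℕ => lp.single 2 k (x k : ℂ)) x :=
      lp.hasSum_single (by norm_num) x
    have h2 : HasSum (fun k : ℕ => S (lp.single 2 k (x k : ℂ))) (S x) := S.hasSum h1
    have h3 := (innerSL ℂ (e m)).hasSum h2
    have h4 : (fun k : ℕ => (innerSL ℂ (e m)) (S (lp.single 2 k (x k : ℂ))))
        = fun k => (if m = f k then x k else 0) := by
      funext k
      have : lp.single 2 k (x k : ℂ) = (x k) • e k := by
        rw [e, ← lp.single_smul]; norm_num
      rw [innerSL_apply_apply, this, map_smul, hS, inner_smul_right, heval, e, lp.single_apply]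
      split_ifs with h <;> simp [Pi.single_apply, h]
    have h5 : (innerSL ℂ (e m)) (S x) = (S x) m := heval m (S x)
    rw [h5, h4] at h3
    exact h3
  have hcoef' : ∀ m : ℕ, (S x) m = lam * x m := by
    intro m
    rw [hSx, lp.coeFn_smul]; rfl
  have key1 : ∀ j : ℕ, lam * x (f j) = x j := by
    intro j
    rw [← hcoef' (f j)]
    refine (hcoef (f j)).unique ?_
    have heq : (fun k => if f j = f k then x k else 0) = fun k => if k = j then x j else 0 := by
      funext k
      by_cases h : k = j
      · subst h; simp
      · rw [if_neg h, if_neg (fun hh => h (hf hh.symm))]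
    rw [heq]
    exact hasSum_ite_eq j (x j)
  have key2 : ∀ m : ℕ, m ∉ Set.range f → lam * x m = 0 := by
    intro m hm
    rw [← hcoef' m]
    refine (hcoef m).unique ?_
    have heq : (fun k => if m = f k then x k else 0) = fun _ => (0 : ℂ) := by
      funext k
      rw [if_neg (fun hh => hm ⟨k, hh.symm⟩)]
    rw [heq]
    exact hasSum_zero
  obtain ⟨k₀, hk₀⟩ : ∃ k, x k ≠ 0 := by
    by_contra h
    push_neg at h
    exact hx (by ext k; exact h k)
  have hlam : lam ≠ 0 := by
    rintro rfl
    exact hk₀ (by rw [← key1 k₀, zero_mul])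
  have hlampos : (0:ℝ) < ‖lam‖ := norm_pos_iff.mpr hlam
  have hsum : Summable fun i => ‖x i‖ ^ 2 := by
    have := lp.memℓp x
    rw [memℓp_gen_iff (by norm_num)] at this
    have h2 : ((2:ENNReal).toReal) = (2:ℝ) := by norm_num
    rw [h2] at this
    refine this.congr fun i => ?_
    rw [show (2:ℝ) = ((2:ℕ):ℝ) by norm_num, Real.rpow_natCast]
  -- forward orbit : ‖lam‖ > 1
  have hfor : 1 < ‖lam‖ := by
    have horb : ∀ n : ℕ, x (f^[n] k₀) = x k₀ / lam ^ n := by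
      intro n
      induction n with
      | zero => simp
      | succ n ih =>
        rw [Function.iterate_succ_apply']
        have h := key1 (f^[n] k₀)
        rw [ih, eq_div_iff (pow_ne_zero n hlam)] at h
        rw [eq_div_iff (pow_ne_zero _ hlam), ← h]
        ring
    have hinj : Function.Injective fun n => f^[n] k₀ := by
      intro n m hnm
      by_contra hne
      wlog h : n < m generalizing n m
      · exact this hnm.symm (Ne.symm hne) (by omega)
      have : f^[n] (f^[m - n] k₀) = f^[n] k₀ := by
        rw [← Function.iterate_add_apply, show n + (m - n) = m by omega]; exact hnm.symm
      exact hper k₀ (m - n) (by omega) (hf.iterate n this)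
    have hs2 : Summable fun n : ℕ => ‖x k₀‖ ^ 2 * ((1 / ‖lam‖) ^ 2) ^ n := by
      have hcomp := hsum.comp_injective hinj
      refine hcomp.congr fun n => ?_
      simp only [Function.comp_apply, horb n]
      rw [norm_div, norm_pow, div_pow]
      field_simp
      ring_nf
      rw [← mul_pow, mul_inv_cancel₀ hlampos.ne', one_pow]
    have hgeom : Summable fun n : ℕ => (((1:ℝ) / ‖lam‖) ^ 2) ^ n := by
      have hc : ‖x k₀‖ ^ 2 ≠ 0 := pow_ne_zero 2 (norm_ne_zero_iff.mpr hk₀)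
      exact (summable_mul_left_iff hc).mp hs2
    have hlt : ((1:ℝ) / ‖lam‖) ^ 2 < 1 := by
      have h := summable_geometric_iff_norm_lt_one.mp hgeom
      rwa [Real.norm_eq_abs, abs_of_nonneg (by positivity)] at h
    have h1 : 1 / ‖lam‖ < 1 := by nlinarith [one_div_pos.mpr hlampos]
    rwa [div_lt_one hlampos] at h1
  -- backward orbit : ‖lam‖ < 1
  have hrange : ∀ m : {m : ℕ // x m ≠ 0}, ∃ j, f j = m.1 ∧ x j = lam * x m.1 := by
    rintro ⟨m, hm⟩
    have hmem : m ∈ Set.range f := by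
      by_contra h
      exact hm ((mul_eq_zero.mp (key2 m h)).resolve_left hlam)
    obtain ⟨j, hj⟩ := hmem
    refine ⟨j, hj, ?_⟩
    show (x j : ℂ) = lam * x m
    rw [← key1 j, hj]
  choose g hg1 hg2 using hrange
  set g' : {m : ℕ // x m ≠ 0} → {m : ℕ // x m ≠ 0} :=
    fun m => ⟨g m, by rw [hg2]; exact mul_ne_zero hlam m.2⟩ with hg'
  set b : ℕ → {m : ℕ // x m ≠ 0} := fun n => g'^[n] ⟨k₀, hk₀⟩ with hb
  have hbsucc : ∀ n, b (n + 1) = g' (b n) := by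
    intro n; simp [hb, Function.iterate_succ_apply']
  have hbf : ∀ n, f ((b (n+1)).1) = (b n).1 := by
    intro n; rw [hbsucc]; exact hg1 (b n)
  have hbx : ∀ n, x ((b n).1) = lam ^ n * x k₀ := by
    intro n
    induction n with
    | zero => simp [hb]
    | succ n ih =>
      rw [hbsucc]
      show x (g (b n)) = _
      rw [hg2, ih]; ring
  have hbit : ∀ n j : ℕ, f^[j] ((b (n + j)).1) = (b n).1 := by
    intro n j
    induction j with
    | zero => rfl
    | succ j ih =>
      rw [show n + (j+1) = (n+j) + 1 by ring, Function.iterate_succ_apply, hbf]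
      exact ih
  have hbinj : Function.Injective fun n => (b n).1 := by
    intro n m hnm
    by_contra hne
    wlog h : n < m generalizing n m
    · exact this hnm.symm (Ne.symm hne) (by omega)
    have hmm := hbit n (m - n)
    rw [show n + (m - n) = m by omega] at hmm
    have hnm' : (b n).1 = (b m).1 := hnm
    exact hper (b m).1 (m - n) (by omega) (by rw [hmm]; exact hnm')
  have hs2 : Summable fun n : ℕ => ‖x k₀‖ ^ 2 * (‖lam‖ ^ 2) ^ n := by
    have hcomp := hsum.comp_injective hbinj
    refine hcomp.congr fun n => ?_
    simp only [Function.comp_apply, hbx n]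
    rw [norm_mul, norm_pow]
    ring
  have hgeom : Summable fun n : ℕ => (‖lam‖ ^ 2) ^ n := by
    have hc : ‖x k₀‖ ^ 2 ≠ 0 := pow_ne_zero 2 (norm_ne_zero_iff.mpr hk₀)
    exact (summable_mul_left_iff hc).mp hs2
  have hlt : ‖lam‖ ^ 2 < 1 := by
    have h := summable_geometric_iff_norm_lt_one.mp hgeom
    rwa [Real.norm_eq_abs, abs_of_nonneg (by positivity)] at h
  nlinarith
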